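/- arXiv:1904.11337 — 3 statements merged into one kernel-verified Lean document; each statement's English description precedes it below -/
import Mathlib

section
/- For a finite simple undirected graph G that is not Hamiltonian, the Hamiltonian completion number of G equals the path partition number of G: HCN(G) = PPN(G). -/
open SimpleGraph

variable {V : Type*}

/-- A list of vertices forming a path in `G`: nonempty, with distinct vertices,
and consecutive vertices adjacent. -/
def IsPathList (G : SimpleGraph V) (l : List V) : Prop :=
  l ≠ [] ∧ l.Nodup ∧ l.Chain' G.Adj

/-- A path partition of `G`: a list of pairwise vertex-disjoint paths covering
every vertex exactly once. -/
def IsPathPartition (G : SimpleGraph V) (L : List (List V)) : Prop :=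
  (∀ l ∈ L, IsPathList G l) ∧ L.flatten.Nodup ∧ ∀ v : V, v ∈ L.flatten

/-- The path partition number of `G`: the minimum number of paths in a path
partition of `G`. -/
noncomputable def ppn (G : SimpleGraph V) : ℕ :=
  sInf {k | ∃ L : List (List V), IsPathPartition G L ∧ L.length = k}

/-- A graph is Hamiltonian iff it contains a Hamiltonian cycle. -/
def IsHamiltonianGraph [DecidableEq V] (G : SimpleGraph V) : Prop :=
  ∃ (v : V) (p : G.Walk v v), p.IsHamiltonianCycle

/-- The Hamiltonian completion number of `G`: the minimum number of new edges
(between distinct vertices, not already present in `G`) whose addition makes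
`G` Hamiltonian. -/
noncomputable def hcn [DecidableEq V] (G : SimpleGraph V) : ℕ :=
  sInf {k | ∃ E' : Finset (Sym2 V), E'.card = k ∧
    (∀ e ∈ E', ¬ e.IsDiag ∧ e ∉ G.edgeSet) ∧
    IsHamiltonianGraph (G ⊔ SimpleGraph.fromEdgeSet ↑E')}



set_option linter.unusedSectionVars false

namespace HamAux

open List

variable {V : Type*}

section lists
variable [Inhabited V]

/-- Last element of a list (default if empty). -/
def lst (l : List V) : V := l.getLast?.iget

@[simp] lemma lst_singleton (a : V) : lst [a] = a := rfl

@[simp] lemma lst_cons_cons (a b : V) (t : List V) : lst (a :: b :: t) = lst (b :: t) := by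
  simp [lst]

lemma lst_eq_getLast {l : List V} (h : l ≠ []) : lst l = l.getLast h := by
  simp [lst, List.getLast?_eq_getLast_of_ne_nil h]

lemma getLast?_eq_lst {l : List V} (h : l ≠ []) : l.getLast? = some (lst l) := by
  simp [lst, List.getLast?_eq_getLast_of_ne_nil h]

lemma lst_mem {l : List V} (h : l ≠ []) : lst l ∈ l := by
  rw [lst_eq_getLast h]; exact List.getLast_mem h

lemma lst_append {l m : List V} (h : m ≠ []) : lst (l ++ m) = lst m := by
  simp [lst, List.getLast?_append_of_ne_nil _ h]

lemma headI_mem {l : List V} (h : l ≠ []) : l.headI ∈ l := by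
  cases l with
  | nil => exact absurd rfl h
  | cons a t => simp

lemma headI_append {l : List V} (m : List V) (h : l ≠ []) : (l ++ m).headI = l.headI := by
  cases l with
  | nil => exact absurd rfl h
  | cons a t => simp

lemma head?_eq_headI {l : List V} (h : l ≠ []) : l.head? = some l.headI := by
  cases l with
  | nil => exact absurd rfl h
  | cons a t => rfl

lemma lst_ne_headI {l : List V} (h : l.Nodup) (h2 : 2 ≤ l.length) : lst l ≠ l.headI := by
  obtain ⟨a, b, t, rfl⟩ : ∃ a b t, l = a :: b :: t := by
    cases l with
    | nil => simp at h2
    | cons a l1 =>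
      cases l1 with
      | nil => simp at h2
      | cons b t => exact ⟨a, b, t, rfl⟩
  have hm : lst (b :: t) ∈ b :: t := lst_mem (by simp)
  intro he
  rw [lst_cons_cons, List.headI_cons] at he
  rw [he] at hm
  exact (List.nodup_cons.mp h).1 hm

/-- The list of `Sym2`s of consecutive pairs of a list. -/
def sPairs (l : List V) : List (Sym2 V) := l.zipWith (fun a b => s(a, b)) l.tail

@[simp] lemma sPairs_nil : sPairs ([] : List V) = [] := rfl
@[simp] lemma sPairs_singleton (a : V) : sPairs [a] = [] := rfl
@[simp] lemma sPairs_cons_cons (a b : V) (t : List V) :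
    sPairs (a :: b :: t) = s(a, b) :: sPairs (b :: t) := rfl

lemma mem_of_mem_sPairs : ∀ {l : List V} {a b : V}, s(a, b) ∈ sPairs l → a ∈ l ∧ b ∈ l
  | [], a, b, h => by simp at h
  | [x], a, b, h => by simp at h
  | x :: y :: t, a, b, h => by
    rw [sPairs_cons_cons, List.mem_cons] at h
    rcases h with h | h
    · rw [Sym2.eq_iff] at h
      rcases h with ⟨rfl, rfl⟩ | ⟨rfl, rfl⟩ <;> simp
    · obtain ⟨ha, hb⟩ := mem_of_mem_sPairs h
      exact ⟨List.mem_cons_of_mem _ ha, List.mem_cons_of_mem _ hb⟩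

lemma sPairs_nodup : ∀ {l : List V}, l.Nodup → (sPairs l).Nodup
  | [], _ => by simp
  | [x], _ => by simp
  | x :: y :: t, h => by
    rw [sPairs_cons_cons, List.nodup_cons]
    refine ⟨fun hm => ?_, sPairs_nodup (List.nodup_cons.mp h).2⟩
    exact (List.nodup_cons.mp h).1 (mem_of_mem_sPairs hm).1

lemma wrap_not_mem_sPairs {l : List V} (h : l.Nodup) (h3 : 3 ≤ l.length) :
    s(lst l, l.headI) ∉ sPairs l := by
  obtain ⟨x, y, t, rfl⟩ : ∃ x y t, l = x :: y :: t := by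
    cases l with
    | nil => simp at h3
    | cons a l1 =>
      cases l1 with
      | nil => simp at h3
      | cons b t => exact ⟨a, b, t, rfl⟩
  have ht : t ≠ [] := by
    cases t with
    | nil => simp at h3
    | cons c t' => simp
  rw [sPairs_cons_cons, lst_cons_cons, List.headI_cons]
  intro hm
  rcases List.mem_cons.mp hm with he | hm'
  · rw [Sym2.eq_iff] at he
    rcases he with ⟨h1, h2⟩ | ⟨h1, h2⟩
    · refine (List.nodup_cons.mp h).1 ?_
      rw [h2]; exact List.mem_cons_self
    · have hmem : lst (y :: t) ∈ t := by
        obtain ⟨c, t', rfl⟩ := List.exists_cons_of_ne_nil ht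
        rw [lst_cons_cons]; exact lst_mem (by simp)
      rw [h1] at hmem
      exact (List.nodup_cons.mp (List.nodup_cons.mp h).2).1 hmem
  · exact (List.nodup_cons.mp h).1 (mem_of_mem_sPairs hm').2

lemma sPairs_append : ∀ {l : List V} (m : List V), l ≠ [] → m ≠ [] →
    sPairs (l ++ m) = sPairs l ++ s(lst l, m.headI) :: sPairs m
  | [], _, h, _ => absurd rfl h
  | [x], m, _, hm => by
    obtain ⟨b, m', rfl⟩ := List.exists_cons_of_ne_nil hm
    simp
  | x :: y :: t, m, _, hm => by
    have h2 := sPairs_append (l := y :: t) m (by simp) hm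
    simp only [List.cons_append] at h2 ⊢
    rw [sPairs_cons_cons, h2, lst_cons_cons, sPairs_cons_cons]
    rfl

end lists

section graphs
variable [Inhabited V] (G : SimpleGraph V) [DecidableRel G.Adj]

/-- The consecutive pairs of a list that are not edges of `G`. -/
def badEdges : List V → List (Sym2 V)
  | [] => []
  | [_] => []
  | a :: b :: t => if G.Adj a b then badEdges (b :: t) else s(a, b) :: badEdges (b :: t)

lemma badEdges_sublist : ∀ l : List V, badEdges G l <+ sPairs l
  | [] => by simp [badEdges]
  | [x] => by simp [badEdges]
  | a :: b :: t => by
    rw [sPairs_cons_cons]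
    by_cases h : G.Adj a b
    · rw [badEdges, if_pos h]
      exact (badEdges_sublist (b :: t)).cons _
    · rw [badEdges, if_neg h]
      exact (badEdges_sublist (b :: t)).cons₂ _

lemma badEdges_spec (H : SimpleGraph V) :
    ∀ {l : List V}, l.Chain' H.Adj → ∀ e ∈ badEdges G l, e ∈ H.edgeSet ∧ e ∉ G.edgeSet
  | [], _, e, he => by simp [badEdges] at he
  | [x], _, e, he => by simp [badEdges] at he
  | a :: b :: t, hch, e, he => by
    have hch' : (b :: t).Chain' H.Adj := (List.isChain_cons_cons.mp hch).2
    by_cases h : G.Adj a b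
    · rw [badEdges, if_pos h] at he
      exact badEdges_spec H hch' e he
    · rw [badEdges, if_neg h] at he
      rcases List.mem_cons.mp he with rfl | he'
      · refine ⟨(SimpleGraph.mem_edgeSet H).mpr (List.isChain_cons_cons.mp hch).1, fun hc => ?_⟩
        exact h ((SimpleGraph.mem_edgeSet G).mp hc)
      · exact badEdges_spec H hch' e he'

lemma chain'_of_badEdges_nil : ∀ {l : List V}, badEdges G l = [] → l.Chain' G.Adj
  | [], _ => List.IsChain.nil
  | [x], _ => List.IsChain.singleton _
  | a :: b :: t, h => by
    by_cases hab : G.Adj a b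
    · rw [badEdges, if_pos hab] at h
      exact List.isChain_cons_cons.mpr ⟨hab, chain'_of_badEdges_nil h⟩
    · rw [badEdges, if_neg hab] at h
      simp at h

/-- Split a list into maximal runs of consecutive `G`-adjacent vertices. -/
def splitChain : List V → List (List V)
  | [] => []
  | [a] => [[a]]
  | a :: b :: t =>
    if G.Adj a b then
      match splitChain (b :: t) with
      | [] => [[a]]
      | q :: L => (a :: q) :: L
    else [a] :: splitChain (b :: t)

lemma splitChain_spec : ∀ l : List V, l ≠ [] →
    (splitChain G l).flatten = l ∧
      (∀ p ∈ splitChain G l, p ≠ [] ∧ p.Chain' G.Adj) ∧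
      (splitChain G l).length = (badEdges G l).length + 1
  | [], h => absurd rfl h
  | [a], _ => by
    refine ⟨by simp [splitChain], ?_, by simp [splitChain, badEdges]⟩
    intro p hp
    simp [splitChain] at hp
    subst hp
    simp
    exact List.IsChain.singleton _
  | a :: b :: t, _ => by
    obtain ⟨hf, hp, hl⟩ := splitChain_spec (b :: t) (by simp)
    by_cases hab : G.Adj a b
    · obtain ⟨q, L, hq⟩ : ∃ q L, splitChain G (b :: t) = q :: L := by
        cases h : splitChain G (b :: t) with
        | nil => rw [h] at hf; simp at hf
        | cons q L => exact ⟨q, L, rfl⟩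
      rw [hq] at hf hp hl
      obtain ⟨q', rfl⟩ : ∃ q2, q = b :: q2 := by
        obtain ⟨c, q2, rfl⟩ := List.exists_cons_of_ne_nil (hp q (List.mem_cons_self)).1
        rw [List.flatten_cons, List.cons_append] at hf
        injection hf with h1 h2
        exact ⟨q2, by rw [h1]⟩
      rw [List.flatten_cons, List.cons_append] at hf
      injection hf with h1 hf2
      have hsc : splitChain G (a :: b :: t) = (a :: b :: q') :: L := by
        rw [splitChain, if_pos hab, hq]
      refine ⟨?_, ?_, ?_⟩
      · rw [hsc, List.flatten_cons, List.cons_append]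
        simp [hf2]
      · rw [hsc]
        intro p hmem
        rcases List.mem_cons.mp hmem with rfl | hmem'
        · exact ⟨by simp, List.isChain_cons_cons.mpr ⟨hab, (hp (b :: q') (List.mem_cons_self)).2⟩⟩
        · exact hp _ (List.mem_cons_of_mem _ hmem')
      · rw [hsc, badEdges, if_pos hab]
        simpa using hl
    · have hsc : splitChain G (a :: b :: t) = [a] :: splitChain G (b :: t) := by
        rw [splitChain, if_neg hab]
      refine ⟨?_, ?_, ?_⟩
      · rw [hsc, List.flatten_cons, hf]; simp
      · rw [hsc]
        intro p hmem
        rcases List.mem_cons.mp hmem with rfl | hmem'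
        · exact ⟨by simp, List.IsChain.singleton _⟩
        · exact hp _ hmem'
      · rw [hsc, badEdges, if_neg hab]
        simp [hl]

end graphs

section junctions
variable [Inhabited V]

lemma flatten_ne_nil {L : List (List V)} (h : ∀ p ∈ L, p ≠ []) (hL : L ≠ []) :
    L.flatten ≠ [] := by
  rw [Ne, List.flatten_eq_nil_iff]
  push_neg
  obtain ⟨p, M, rfl⟩ := List.exists_cons_of_ne_nil hL
  exact ⟨p, List.mem_cons_self, h p (List.mem_cons_self)⟩

lemma headI_flatten {p : List V} (M : List (List V)) (hp : p ≠ []) :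
    ((p :: M).flatten).headI = p.headI := by
  rw [List.flatten_cons]; exact headI_append _ hp

lemma lst_flatten : ∀ {L : List (List V)}, (∀ p ∈ L, p ≠ []) → L ≠ [] →
    lst L.flatten = lst (lst L)
  | [], _, h => absurd rfl h
  | [p], _, _ => by simp
  | p :: q :: M, h, _ => by
    have hne : (q :: M).flatten ≠ [] :=
      flatten_ne_nil (fun r hr => h r (List.mem_cons_of_mem _ hr)) (by simp)
    rw [List.flatten_cons, lst_append hne, lst_cons_cons]
    exact lst_flatten (fun r hr => h r (List.mem_cons_of_mem _ hr)) (by simp)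

/-- The connecting `Sym2`s between consecutive paths of a path partition. -/
def junctions : List (List V) → List (Sym2 V)
  | [] => []
  | [_] => []
  | p :: q :: L => s(lst p, q.headI) :: junctions (q :: L)

lemma junctions_length : ∀ {L : List (List V)}, L ≠ [] →
    (junctions L).length + 1 = L.length
  | [], h => absurd rfl h
  | [_], _ => by simp [junctions]
  | p :: q :: M, _ => by
    rw [junctions]
    simpa using junctions_length (L := q :: M) (by simp)

lemma junctions_sublist : ∀ {L : List (List V)}, (∀ p ∈ L, p ≠ []) →
    junctions L <+ sPairs L.flatten
  | [], _ => by simp [junctions]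
  | [p], _ => by simp [junctions]
  | p :: q :: M, h => by
    have hq : ∀ r ∈ q :: M, r ≠ [] := fun r hr => h r (List.mem_cons_of_mem _ hr)
    have hne : (q :: M).flatten ≠ [] := flatten_ne_nil hq (by simp)
    rw [junctions, List.flatten_cons,
      sPairs_append _ (h p (List.mem_cons_self)) hne,
      headI_flatten _ (hq q (List.mem_cons_self))]
    refine List.Sublist.trans ?_ (List.sublist_append_right _ _)
    exact (junctions_sublist hq).cons₂ _

lemma junctions_not_adj (G : SimpleGraph V) :
    ∀ {L : List (List V)}, List.Chain' (fun p q : List V => ¬ G.Adj (lst p) q.headI) L →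
      ∀ e ∈ junctions L, e ∉ G.edgeSet
  | [], _, e, he => by simp [junctions] at he
  | [_], _, e, he => by simp [junctions] at he
  | p :: q :: M, hch, e, he => by
    rcases List.mem_cons.mp he with rfl | he'
    · intro hc
      exact (List.isChain_cons_cons.mp hch).1 ((SimpleGraph.mem_edgeSet G).mp hc)
    · exact junctions_not_adj G (List.isChain_cons_cons.mp hch).2 e he'

lemma junctions_not_diag :
    ∀ {L : List (List V)}, (∀ p ∈ L, p ≠ []) → L.flatten.Nodup →
      ∀ e ∈ junctions L, ¬ e.IsDiag
  | [], _, _, e, he => by simp [junctions] at he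
  | [_], _, _, e, he => by simp [junctions] at he
  | p :: q :: M, h, hnd, e, he => by
    have hq : ∀ r ∈ q :: M, r ≠ [] := fun r hr => h r (List.mem_cons_of_mem _ hr)
    rw [List.flatten_cons] at hnd
    rcases List.mem_cons.mp he with rfl | he'
    · rw [Sym2.mk_isDiag_iff]
      intro hc
      have h1 : lst p ∈ p := lst_mem (h p (List.mem_cons_self))
      have h2 : q.headI ∈ (q :: M).flatten := by
        rw [List.flatten_cons]
        exact List.mem_append_left _ (headI_mem (hq q (List.mem_cons_self)))
      rw [hc] at h1
      exact (List.disjoint_of_nodup_append hnd) h1 h2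
    · exact junctions_not_diag hq (List.Nodup.of_append_right hnd) e he'

lemma chain'_flatten {G H : SimpleGraph V} (hGH : ∀ a b, G.Adj a b → H.Adj a b) :
    ∀ {L : List (List V)}, (∀ p ∈ L, p ≠ [] ∧ p.Chain' G.Adj) →
      (∀ e ∈ junctions L, e ∈ H.edgeSet) → List.Chain' H.Adj L.flatten
  | [], _, _ => List.IsChain.nil
  | [p], h, _ => by
    rw [List.flatten_cons, List.flatten_nil, List.append_nil]
    exact List.IsChain.imp hGH ((h p (List.mem_cons_self)).2)
  | p :: q :: M, h, hj => by
    have hq : ∀ r ∈ q :: M, r ≠ [] ∧ r.Chain' G.Adj :=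
      fun r hr => h r (List.mem_cons_of_mem _ hr)
    rw [List.flatten_cons]
    refine List.IsChain.append (List.IsChain.imp hGH ((h p (List.mem_cons_self)).2))
      (chain'_flatten hGH hq (fun e he => hj e (List.mem_cons_of_mem _ he))) ?_
    intro x hx y hy
    rw [getLast?_eq_lst (h p (List.mem_cons_self)).1, Option.mem_def,
      Option.some.injEq] at hx
    have hne : (q :: M).flatten ≠ [] :=
      flatten_ne_nil (fun r hr => (hq r hr).1) (by simp)
    rw [head?_eq_headI hne, Option.mem_def, Option.some.injEq] at hy
    have hj0 : s(lst p, q.headI) ∈ H.edgeSet := hj _ (List.mem_cons_self)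
    rw [headI_flatten _ (hq q (List.mem_cons_self)).1] at hy
    subst hx; subst hy
    exact (SimpleGraph.mem_edgeSet H).mp hj0

end junctions

section walks
variable [Inhabited V]

lemma exists_merge (G : SimpleGraph V) :
    ∀ L : List (List V), (∀ p ∈ L, IsPathList G p) → L.flatten.Nodup →
      ¬ List.Chain' (fun p q : List V => ¬ G.Adj (lst p) q.headI) L →
      ∃ L' : List (List V), (∀ p ∈ L', IsPathList G p) ∧
        L'.flatten.Perm L.flatten ∧ L'.length + 1 = L.length
  | [], _, _, hc => absurd List.IsChain.nil hc
  | [p], _, _, hc => absurd (List.IsChain.singleton _) hc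
  | p :: q :: M, h, hnd, hc => by
    have hp := h p (List.mem_cons_self)
    have hq := h q (List.mem_cons_of_mem _ (List.mem_cons_self))
    by_cases hadj : G.Adj (lst p) q.headI
    · refine ⟨(p ++ q) :: M, ?_, ?_, by simp⟩
      · intro r hr
        rcases List.mem_cons.mp hr with rfl | hr'
        · refine ⟨by simp [hp.1], ?_, ?_⟩
          · have : (p ++ q) <+ (p :: q :: M).flatten := by
              rw [List.flatten_cons, List.flatten_cons, ← List.append_assoc]
              exact List.sublist_append_left _ _
            exact this.nodup hnd
          · refine hp.2.2.append hq.2.2 ?_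
            intro x hx y hy
            rw [getLast?_eq_lst hp.1, Option.mem_def, Option.some.injEq] at hx
            rw [head?_eq_headI hq.1, Option.mem_def, Option.some.injEq] at hy
            subst hx; subst hy; exact hadj
        · exact h r (List.mem_cons_of_mem _ (List.mem_cons_of_mem _ hr'))
      · rw [List.flatten_cons, List.flatten_cons, List.flatten_cons, ← List.append_assoc]
    · have hc' : ¬ List.Chain' (fun p q : List V => ¬ G.Adj (lst p) q.headI) (q :: M) := by
        intro hch
        exact hc (List.isChain_cons_cons.mpr ⟨hadj, hch⟩)
      have hnd' : (q :: M).flatten.Nodup := by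
        rw [List.flatten_cons] at hnd
        exact hnd.of_append_right
      obtain ⟨L'', hL1, hL2, hL3⟩ := exists_merge G (q :: M)
        (fun r hr => h r (List.mem_cons_of_mem _ hr)) hnd' hc'
      refine ⟨p :: L'', ?_, ?_, by simpa using hL3⟩
      · intro r hr
        rcases List.mem_cons.mp hr with rfl | hr'
        · exact hp
        · exact hL1 r hr'
      · rw [List.flatten_cons, List.flatten_cons]
        exact hL2.append_left p

lemma exists_walk (H : SimpleGraph V) :
    ∀ (t : List V) (a : V), List.Chain H.Adj a t →
      ∃ w : H.Walk a (lst (a :: t)), w.support = a :: t ∧ w.edges = sPairs (a :: t)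
  | [], a, _ => ⟨Walk.nil.copy rfl (lst_singleton a).symm, by simp, by simp⟩
  | x :: t, a, hch => by
    replace hch : H.Adj a x ∧ List.Chain H.Adj x t := List.isChain_cons_cons.mp hch
    obtain ⟨w, hs, he⟩ := exists_walk H t x hch.2
    refine ⟨(Walk.cons hch.1 w).copy rfl (lst_cons_cons a x t).symm, ?_, ?_⟩
    · simp [hs]
    · simp [he]

lemma isHam_of_list [DecidableEq V] (H : SimpleGraph V) {c : List V} (h1 : c.Nodup)
    (h2 : 3 ≤ c.length) (h3 : ∀ v : V, v ∈ c) (h4 : c.Chain' H.Adj)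
    (h5 : H.Adj (lst c) c.headI) : IsHamiltonianGraph H := by
  obtain ⟨x, t, rfl⟩ : ∃ x t, c = x :: t := by
    cases c with
    | nil => simp at h2
    | cons x t => exact ⟨x, t, rfl⟩
  have hch : List.Chain H.Adj x t := h4
  obtain ⟨w, hs, he⟩ := exists_walk H t x hch
  have h5' : H.Adj (lst (x :: t)) x := h5
  refine ⟨x, w.concat h5', ?_⟩
  rw [Walk.isHamiltonianCycle_iff_isCycle_and_support_count_tail_eq_one]
  have hsupp : (w.concat h5').support = (x :: t) ++ [x] := by
    rw [Walk.support_concat, hs]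
  constructor
  · constructor
    constructor
    constructor
    · -- edges nodup
      rw [Walk.edges_concat, he, List.concat_eq_append]
      rw [List.nodup_append]
      refine ⟨sPairs_nodup h1, by simp, ?_⟩
      intro e hme
      simp only [List.mem_singleton]
      intro b hb hee
      subst hb
      subst hee
      exact wrap_not_mem_sPairs h1 h2 hme
    · exact Walk.concat_ne_nil w h5'
    · -- support tail nodup
      rw [hsupp]
      simp only [List.cons_append, List.tail_cons]
      have : (t ++ [x]).Perm (x :: t) := List.perm_append_comm.trans (by simp)
      exact this.nodup_iff.mpr h1
  · intro a
    rw [hsupp]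
    simp only [List.cons_append, List.tail_cons]
    have hperm : (t ++ [x]).Perm (x :: t) := List.perm_append_comm.trans (by simp)
    rw [hperm.count_eq]
    exact List.count_eq_one_of_mem h1 (h3 a)

end walks

section rotate
variable [Inhabited V]

lemma rotate_merge (G : SimpleGraph V) {L : List (List V)}
    (h : ∀ p ∈ L, IsPathList G p) (hnd : L.flatten.Nodup) (h2 : 2 ≤ L.length)
    (hadj : G.Adj (lst L.flatten) (L.flatten.headI)) :
    ∃ L' : List (List V), (∀ p ∈ L', IsPathList G p) ∧
      L'.flatten.Perm L.flatten ∧ L'.length + 1 = L.length := by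
  obtain ⟨p, M, rfl⟩ : ∃ p M, L = p :: M := by
    cases L with
    | nil => simp at h2
    | cons p M => exact ⟨p, M, rfl⟩
  have hMne : M ≠ [] := by
    intro h0; rw [h0] at h2; simp at h2
  have hpne : ∀ r ∈ p :: M, r ≠ [] := fun r hr => (h r hr).1
  have hMpne : ∀ r ∈ M, r ≠ [] := fun r hr => hpne r (List.mem_cons_of_mem _ hr)
  have hfMne : M.flatten ≠ [] := flatten_ne_nil hMpne hMne
  have hfeq : (p :: M).flatten = p ++ M.flatten := List.flatten_cons ..
  have hflat'' : (M ++ [p]).flatten = M.flatten ++ p := by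
    rw [List.flatten_append]; simp
  have hperm : (M ++ [p]).flatten.Perm ((p :: M).flatten) := by
    rw [hflat'', hfeq]; exact List.perm_append_comm
  have hpieces'' : ∀ r ∈ M ++ [p], IsPathList G r := by
    intro r hr
    rcases List.mem_append.mp hr with hr' | hr'
    · exact h r (List.mem_cons_of_mem _ hr')
    · rw [List.mem_singleton] at hr'
      subst hr'
      exact h r (List.mem_cons_self)
  have hnd'' : (M ++ [p]).flatten.Nodup := hperm.nodup_iff.mpr hnd
  have hnotchain : ¬ List.Chain' (fun a b : List V => ¬ G.Adj (lst a) b.headI) (M ++ [p]) := by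
    intro hch
    replace hch := List.isChain_append.mp hch
    have h1 : M.getLast? = some (lst M) := getLast?_eq_lst hMne
    have h2' : ([p] : List (List V)).head? = some p := rfl
    have e1 : lst ((p :: M).flatten) = lst (lst M) := by
      rw [hfeq, lst_append hfMne, lst_flatten hMpne hMne]
    have e2 : ((p :: M).flatten).headI = p.headI := by
      rw [hfeq, headI_append _ (hpne p (List.mem_cons_self))]
    rw [e1, e2] at hadj
    exact hch.2.2 (lst M) h1 p h2' hadj
  obtain ⟨L', hA, hB, hC⟩ := exists_merge G (M ++ [p]) hpieces'' hnd'' hnotchain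
  refine ⟨L', hA, hB.trans hperm, ?_⟩
  rw [List.length_append] at hC
  simpa using hC

end rotate

end HamAux


theorem hcn_eq_ppn_of_not_hamiltonian [Fintype V] [DecidableEq V]
    (G : SimpleGraph V) (h3 : 3 ≤ Fintype.card V)
    (hG : ¬ IsHamiltonianGraph G) : hcn G = ppn G := by
  have hNe : Nonempty V := Fintype.card_pos_iff.mp (by omega)
  haveI : Inhabited V := Classical.inhabited_of_nonempty hNe
  haveI : DecidableRel G.Adj := Classical.decRel _
  -- the set of path-partition sizes
  set PS : Set ℕ := {k | ∃ L : List (List V), IsPathPartition G L ∧ L.length = k} with hPS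
  have hsing : ∀ l : List V, (List.map (fun v => [v]) l).flatten = l := by
    intro l
    induction l with
    | nil => simp
    | cons a t ih => simp [ih]
  have hPne : PS.Nonempty := by
    refine ⟨_, Finset.univ.toList.map (fun v => [v]), ⟨?_, ?_, ?_⟩, rfl⟩
    · intro p hp
      simp only [List.mem_map] at hp
      obtain ⟨v, -, rfl⟩ := hp
      exact ⟨by simp, by simp, List.IsChain.singleton _⟩
    · rw [hsing]; exact Finset.nodup_toList _
    · intro v; rw [hsing]; simp [Finset.mem_toList]
  have hppn : ppn G = sInf PS := rfl
  obtain ⟨L, hL, hLlen⟩ := Nat.sInf_mem hPne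
  obtain ⟨hpaths, hnd, hmem⟩ := hL
  set c := L.flatten with hceq
  have hpne : ∀ p ∈ L, p ≠ [] := fun p hp => (hpaths p hp).1
  have hcard : c.length = Fintype.card V := by
    have h1 : c.toFinset = Finset.univ :=
      Finset.eq_univ_iff_forall.mpr (fun v => List.mem_toFinset.mpr (hmem v))
    rw [← List.toFinset_card_of_nodup hnd, h1, Finset.card_univ]
  have hc3 : 3 ≤ c.length := by omega
  have hcne : c ≠ [] := by
    intro h0
    rw [h0] at hc3
    simp at hc3
  have hLne : L ≠ [] := by
    intro h0
    apply hcne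
    rw [hceq, h0]
    rfl
  have hL1 : 1 ≤ L.length := by
    rcases L with _ | ⟨p, M⟩
    · exact absurd rfl hLne
    · simp
  -- minimality
  have hmin : ∀ L' : List (List V), (∀ p ∈ L', IsPathList G p) → L'.flatten.Perm c →
      L'.length + 1 = L.length → False := by
    intro L' h1 h2 h1len
    have hmemset : L'.length ∈ PS :=
      ⟨L', ⟨h1, h2.nodup_iff.mpr hnd, fun v => h2.mem_iff.mpr (hmem v)⟩, rfl⟩
    have hle := Nat.sInf_le hmemset
    omega
  have hchain : List.Chain' (fun p q : List V => ¬ G.Adj (HamAux.lst p) q.headI) L := by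
    by_contra hcon
    obtain ⟨L', h1, h2, h3'⟩ := HamAux.exists_merge G L hpaths hnd hcon
    exact hmin L' h1 h2 h3'
  have hwrapadj : ¬ G.Adj (HamAux.lst c) c.headI := by
    intro hadj
    rcases Nat.lt_or_ge L.length 2 with hl2 | hl2
    · obtain ⟨p, M, rfl⟩ := List.exists_cons_of_ne_nil hLne
      have hM0 : M = [] := by
        rw [List.length_cons] at hl2
        exact List.length_eq_zero_iff.mp (by omega)
      subst hM0
      apply hG
      refine HamAux.isHam_of_list G hnd hc3 hmem ?_ hadj
      have h2 : List.Chain' G.Adj (([p] : List (List V)).flatten) := by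
        rw [List.flatten_cons, List.flatten_nil, List.append_nil]
        exact (hpaths p (List.mem_cons_self)).2.2
      exact h2
    · obtain ⟨L', hA, hB, hC⟩ := HamAux.rotate_merge G hpaths hnd hl2 hadj
      exact hmin L' hA hB hC
  -- the completion edge set
  have hwnd : ¬ (s(HamAux.lst c, c.headI)).IsDiag := by
    rw [Sym2.mk_isDiag_iff]
    exact HamAux.lst_ne_headI hnd (by omega)
  have hwne : s(HamAux.lst c, c.headI) ∉ G.edgeSet :=
    fun hc0 => hwrapadj ((SimpleGraph.mem_edgeSet G).mp hc0)
  have hjnd := HamAux.junctions_not_diag hpne hnd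
  have hjne := HamAux.junctions_not_adj G hchain
  have hjsub : List.Sublist (HamAux.junctions L) (HamAux.sPairs c) := HamAux.junctions_sublist hpne
  have hwnotmem : s(HamAux.lst c, c.headI) ∉ HamAux.junctions L :=
    fun hm => HamAux.wrap_not_mem_sPairs hnd hc3 (hjsub.subset hm)
  have hlistnd : (s(HamAux.lst c, c.headI) :: HamAux.junctions L).Nodup :=
    List.nodup_cons.mpr ⟨hwnotmem, hjsub.nodup (HamAux.sPairs_nodup hnd)⟩
  set F : Finset (Sym2 V) := (s(HamAux.lst c, c.headI) :: HamAux.junctions L).toFinset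
    with hF
  have hcardF : F.card = L.length := by
    rw [hF, List.toFinset_card_of_nodup hlistnd, List.length_cons,
      HamAux.junctions_length hLne]
  have hvalid : ∀ e ∈ F, ¬ e.IsDiag ∧ e ∉ G.edgeSet := by
    intro e he
    rw [hF, List.mem_toFinset] at he
    rcases List.mem_cons.mp he with rfl | he'
    · exact ⟨hwnd, hwne⟩
    · exact ⟨hjnd e he', hjne e he'⟩
  have hedge : ∀ e ∈ (s(HamAux.lst c, c.headI) :: HamAux.junctions L),
      e ∈ (G ⊔ SimpleGraph.fromEdgeSet (F : Set (Sym2 V))).edgeSet := by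
    intro e he
    rw [SimpleGraph.edgeSet_sup]
    right
    rw [SimpleGraph.edgeSet_fromEdgeSet]
    exact ⟨Finset.mem_coe.mpr (by rw [hF]; exact List.mem_toFinset.mpr he),
      (hvalid e (by rw [hF]; exact List.mem_toFinset.mpr he)).1⟩
  have hchH : List.Chain' (G ⊔ SimpleGraph.fromEdgeSet (F : Set (Sym2 V))).Adj c :=
    HamAux.chain'_flatten (fun a b hab => (SimpleGraph.sup_adj _ _ _ _).mpr (Or.inl hab))
      (fun p hp => ⟨(hpaths p hp).1, (hpaths p hp).2.2⟩)
      (fun e he => hedge e (List.mem_cons_of_mem _ he))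
  have hwadj : (G ⊔ SimpleGraph.fromEdgeSet (F : Set (Sym2 V))).Adj (HamAux.lst c) c.headI :=
    (SimpleGraph.mem_edgeSet _).mp (hedge _ (List.mem_cons_self))
  have hham : IsHamiltonianGraph (G ⊔ SimpleGraph.fromEdgeSet (F : Set (Sym2 V))) :=
    HamAux.isHam_of_list _ hnd hc3 hmem hchH hwadj
  set CS : Set ℕ := {k | ∃ E' : Finset (Sym2 V), E'.card = k ∧
    (∀ e ∈ E', ¬ e.IsDiag ∧ e ∉ G.edgeSet) ∧
    IsHamiltonianGraph (G ⊔ SimpleGraph.fromEdgeSet ↑E')} with hCS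
  have hhcn : hcn G = sInf CS := rfl
  have hhcnmem : L.length ∈ CS := ⟨F, hcardF, hvalid, hham⟩
  have hdir1 : hcn G ≤ ppn G := by
    rw [hhcn, hppn, ← hLlen]
    exact Nat.sInf_le hhcnmem
  -- other direction
  obtain ⟨E', hEcard, hEvalid, hEham⟩ := Nat.sInf_mem (⟨_, hhcnmem⟩ : CS.Nonempty)
  obtain ⟨v, pw, hpw⟩ := hEham
  set d := pw.support.tail with hdeq
  have hdnd : d.Nodup := hpw.isCycle.support_nodup
  have hnotnil : ¬ pw.Nil := hpw.isCycle.not_nil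
  have hdmem : ∀ w : V, w ∈ d := by
    intro w
    have h1 := hpw.isHamiltonian_tail w
    rw [SimpleGraph.Walk.support_tail_of_not_nil pw hnotnil, ← hdeq] at h1
    exact List.count_pos_iff.mp (by omega)
  have hdcard : d.length = Fintype.card V := by
    have h1 : d.toFinset = Finset.univ :=
      Finset.eq_univ_iff_forall.mpr (fun w => List.mem_toFinset.mpr (hdmem w))
    rw [← List.toFinset_card_of_nodup hdnd, h1, Finset.card_univ]
  have hd3 : 3 ≤ d.length := by omega
  have hdne : d ≠ [] := by
    intro h0
    rw [h0] at hd3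
    simp at hd3
  have hsupp : pw.support = v :: d := SimpleGraph.Walk.support_eq_cons pw
  have hchainsupp := SimpleGraph.Walk.isChain_adj_support pw
  rw [hsupp] at hchainsupp
  obtain ⟨y, t, hdt⟩ := List.exists_cons_of_ne_nil hdne
  have hchaind : List.Chain' (G ⊔ SimpleGraph.fromEdgeSet ↑E').Adj d :=
    (List.isChain_cons.mp hchainsupp).2
  have hdlast : HamAux.lst d = v := by
    have h1 : HamAux.lst pw.support = v := by
      rw [HamAux.lst_eq_getLast (SimpleGraph.Walk.support_ne_nil pw)]
      exact SimpleGraph.Walk.getLast_support pw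
    rw [hsupp, hdt, HamAux.lst_cons_cons] at h1
    rw [hdt, h1]
  have hwadjd : (G ⊔ SimpleGraph.fromEdgeSet ↑E').Adj (HamAux.lst d) d.headI := by
    rw [hdlast, hdt, List.headI_cons]
    rw [hdt] at hchainsupp
    exact (List.isChain_cons_cons.mp hchainsupp).1
  obtain ⟨hfl, hpieces, hlen⟩ := HamAux.splitChain_spec G d hdne
  have hbadsub : ∀ e ∈ HamAux.badEdges G d, e ∈ E' := by
    intro e he
    obtain ⟨heH, heG⟩ := HamAux.badEdges_spec G _ hchaind e he
    rw [SimpleGraph.edgeSet_sup] at heH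
    rcases heH with h | h
    · exact absurd h heG
    · rw [SimpleGraph.edgeSet_fromEdgeSet] at h
      exact Finset.mem_coe.mp h.1
  have hbadnd : (HamAux.badEdges G d).Nodup :=
    (HamAux.badEdges_sublist G d).nodup (HamAux.sPairs_nodup hdnd)
  have hbadlen : ∀ extra : Sym2 V, extra ∈ E' → extra ∉ HamAux.badEdges G d →
      (HamAux.badEdges G d).length + 1 ≤ E'.card := by
    intro extra hex hnm
    have hnd2 : (extra :: HamAux.badEdges G d).Nodup := List.nodup_cons.mpr ⟨hnm, hbadnd⟩
    have hsub : (extra :: HamAux.badEdges G d).toFinset ⊆ E' := by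
      intro e he
      rw [List.mem_toFinset] at he
      rcases List.mem_cons.mp he with rfl | he'
      · exact hex
      · exact hbadsub e he'
    have := Finset.card_le_card hsub
    rw [List.toFinset_card_of_nodup hnd2, List.length_cons] at this
    exact this
  have hpathsL0 : ∀ r ∈ HamAux.splitChain G d, IsPathList G r := by
    intro r hr
    refine ⟨(hpieces r hr).1, ?_, (hpieces r hr).2⟩
    have hsubl : List.Sublist r d := hfl ▸ List.sublist_flatten_of_mem hr
    exact hsubl.nodup hdnd
  have hdir2 : ppn G ≤ hcn G := by
    rw [hhcn, ← hEcard, hppn]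
    by_cases hGadj : G.Adj (HamAux.lst d) d.headI
    · -- rotate and merge
      have hbadne : HamAux.badEdges G d ≠ [] := by
        intro h0
        exact hG (HamAux.isHam_of_list G hdnd hd3 hdmem
          (HamAux.chain'_of_badEdges_nil G h0) hGadj)
      have hbadpos : 1 ≤ (HamAux.badEdges G d).length := by
        rcases h0 : HamAux.badEdges G d with _ | ⟨e, es⟩
        · exact absurd h0 hbadne
        · simp
      have hl2 : 2 ≤ (HamAux.splitChain G d).length := by omega
      have hflnd : (HamAux.splitChain G d).flatten.Nodup := by rw [hfl]; exact hdnd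
      have hadj2 : G.Adj (HamAux.lst (HamAux.splitChain G d).flatten)
          ((HamAux.splitChain G d).flatten.headI) := by
        rw [hfl]; exact hGadj
      obtain ⟨L', hA, hB, hC⟩ := HamAux.rotate_merge G hpathsL0 hflnd hl2 hadj2
      rw [hfl] at hB
      have hpart : IsPathPartition G L' :=
        ⟨hA, hB.nodup_iff.mpr hdnd, fun w => hB.mem_iff.mpr (hdmem w)⟩
      have hmemPS : L'.length ∈ PS := ⟨L', hpart, rfl⟩
      have hle := Nat.sInf_le hmemPS
      -- L'.length = badEdges.length ≤ ... need an extra edge? no: L'.length + 1 = splitChain.length = bad.length + 1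
      have hlen2 : L'.length = (HamAux.badEdges G d).length := by omega
      -- badEdges.length ≤ E'.card
      have hsub : (HamAux.badEdges G d).toFinset ⊆ E' := by
        intro e he
        exact hbadsub e (List.mem_toFinset.mp he)
      have hcardb := Finset.card_le_card hsub
      rw [List.toFinset_card_of_nodup hbadnd] at hcardb
      omega
    · -- the wrap edge is an added edge
      have hwmem : s(HamAux.lst d, d.headI) ∈ E' := by
        have h1 := hwadjd
        rw [SimpleGraph.sup_adj] at h1
        rcases h1 with h | h
        · exact absurd h hGadj
        · exact Finset.mem_coe.mp ((SimpleGraph.fromEdgeSet_adj _).mp h).1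
      have hwnm : s(HamAux.lst d, d.headI) ∉ HamAux.badEdges G d := by
        intro hm
        exact HamAux.wrap_not_mem_sPairs hdnd hd3 ((HamAux.badEdges_sublist G d).subset hm)
      have hcardb := hbadlen _ hwmem hwnm
      have hpart : IsPathPartition G (HamAux.splitChain G d) := by
        refine ⟨hpathsL0, ?_, ?_⟩
        · rw [hfl]; exact hdnd
        · intro w; rw [hfl]; exact hdmem w
      have hmemPS : (HamAux.splitChain G d).length ∈ PS := ⟨_, hpart, rfl⟩
      have hle := Nat.sInf_le hmemPS
      omega
  omega
end

section
/- Every finite simple undirected connected graph G has a spanning tree T such that PPN(T) = PPN(G). -/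
open SimpleGraph

variable {V : Type*}

/-! ### Auxiliary lemmas -/

private lemma reach_invariant {H : SimpleGraph V} (g : V → Prop)
    (hg : ∀ a b : V, H.Adj a b → (g a ↔ g b)) {u w : V} (h : H.Reachable u w) :
    g u ↔ g w := by
  obtain ⟨p⟩ := h
  induction p with
  | nil => rfl
  | cons ha _ ih => exact (hg _ _ ha).trans ih

private lemma indexOf_decomp [DecidableEq V] {l s t : List V} {a b : V}
    (hl : l.Nodup) (h : s ++ a :: b :: t = l) :
    l.idxOf a = s.length ∧ l.idxOf b = s.length + 1 := by
  subst h
  rw [List.nodup_append] at hl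
  obtain ⟨hs, hcons, hdisj⟩ := hl
  have ha : a ∉ s := fun hma => hdisj a hma a (by simp) rfl
  have hb : b ∉ s := fun hmb => hdisj b hmb b (by simp) rfl
  have hba : b ≠ a := by
    rw [List.nodup_cons] at hcons
    exact fun h => hcons.1 (h ▸ List.mem_cons_self)
  constructor
  · rw [List.idxOf_append_of_notMem ha, List.idxOf_cons_self, add_zero]
  · rw [List.idxOf_append_of_notMem hb, List.idxOf_cons_ne _ (Ne.symm hba),
      List.idxOf_cons_self]

private lemma not_reachable_cut [DecidableEq V] {L : List (List V)}
    (hnd : L.flatten.Nodup) {l s t : List V} {u w : V}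
    (hlL : l ∈ L) (hdec : s ++ u :: w :: t = l) :
    ¬ ((SimpleGraph.fromRel (fun a b => ∃ l' ∈ L, [a, b] <:+: l') \
        SimpleGraph.fromEdgeSet {s(u, w)}).Reachable u w) := by
  intro hreach
  have hall := (List.nodup_flatten.mp hnd).1
  have hpw := (List.nodup_flatten.mp hnd).2
  have hlnd : l.Nodup := hall l hlL
  have hu : u ∈ l := by rw [← hdec]; simp
  have hw : w ∈ l := by rw [← hdec]; simp
  obtain ⟨hiu, hiw⟩ := indexOf_decomp hlnd hdec
  have hulen : l.idxOf u < l.length := List.idxOf_lt_length_iff.mpr hu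
  have main : ∀ a b : V, (∃ l' ∈ L, [a, b] <:+: l') → s(a, b) ≠ s(u, w) →
      ((l.idxOf a ≤ s.length) ↔ (l.idxOf b ≤ s.length)) := by
    rintro a b ⟨l', hl'L, hinf⟩ hne
    obtain ⟨s', t', hinf⟩ := hinf
    have hinf' : s' ++ a :: b :: t' = l' := by simpa using hinf
    by_cases hll : l' = l
    · subst hll
      obtain ⟨hia, hib⟩ := indexOf_decomp (hall l' hl'L) hinf'
      have hal : a ∈ l' := by rw [← hinf']; simp
      have hbl : b ∈ l' := by rw [← hinf']; simp
      rcases lt_trichotomy s'.length s.length with hc | hc | hc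
      · omega
      · exfalso
        apply hne
        have hau : a = u := (List.idxOf_inj hal).mp (by omega)
        have hbw : b = w := (List.idxOf_inj hbl).mp (by omega)
        rw [hau, hbw]
      · omega
    · have hdisj : List.Disjoint l l' := by
        haveI : Std.Symm (List.Disjoint (α := V)) := ⟨fun x y h => h.symm⟩
        refine List.Pairwise.forall hpw hlL hl'L ?_
        exact fun h => hll h.symm
      have hal : a ∈ l' := by rw [← hinf']; simp
      have hbl : b ∈ l' := by rw [← hinf']; simp
      have hanl : a ∉ l := fun h => hdisj h hal
      have hbnl : b ∉ l := fun h => hdisj h hbl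
      have h1 : l.idxOf a = l.length := List.idxOf_eq_length_iff.mpr hanl
      have h2 : l.idxOf b = l.length := List.idxOf_eq_length_iff.mpr hbnl
      omega
  have key : ∀ a b : V,
      (SimpleGraph.fromRel (fun a b => ∃ l' ∈ L, [a, b] <:+: l') \
        SimpleGraph.fromEdgeSet {s(u, w)}).Adj a b →
      ((l.idxOf a ≤ s.length) ↔ (l.idxOf b ≤ s.length)) := by
    intro a b hab
    rw [SimpleGraph.sdiff_adj, SimpleGraph.fromRel_adj] at hab
    obtain ⟨⟨hne, hor⟩, hnadj⟩ := hab
    have hnedge : s(a, b) ≠ s(u, w) := by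
      intro h
      apply hnadj
      rw [SimpleGraph.fromEdgeSet_adj]
      exact ⟨by simp [h], hne⟩
    rcases hor with h | h
    · exact main a b h hnedge
    · exact (main b a h (by rwa [Sym2.eq_swap])).symm
  have := reach_invariant (fun v => l.idxOf v ≤ s.length) key hreach
  omega

private lemma forest_acyclic {L : List (List V)} (hnd : L.flatten.Nodup) :
    (SimpleGraph.fromRel (fun a b => ∃ l ∈ L, [a, b] <:+: l)).IsAcyclic := by
  classical
  rw [SimpleGraph.isAcyclic_iff_forall_adj_isBridge]
  intro u w hadj
  rw [SimpleGraph.isBridge_iff]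
  obtain ⟨hne, h | h⟩ := (SimpleGraph.fromRel_adj _ _ _).mp hadj
  · obtain ⟨l, hlL, s, t, hinf⟩ := h
    exact not_reachable_cut hnd hlL (by simpa using hinf)
  · obtain ⟨l, hlL, s, t, hinf⟩ := h
    have h2 := not_reachable_cut hnd hlL (by simpa using hinf : s ++ w :: u :: t = l)
    intro hr
    apply h2
    rw [Sym2.eq_swap]
    exact hr.symm

set_option linter.unusedVariables false in
private lemma flatten_map_singleton (xs : List V) :
    (xs.map fun v => [v]).flatten = xs := by
  induction xs with
  | nil => rfl
  | cons a l ih => simp [ih]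

private lemma isPathPartition_singletons [Fintype V] (G : SimpleGraph V) :
    IsPathPartition G ((Finset.univ : Finset V).toList.map (fun v => [v])) := by
  refine ⟨?_, ?_, ?_⟩
  · intro l hl
    obtain ⟨v, _, rfl⟩ := List.mem_map.mp hl
    exact ⟨List.cons_ne_nil _ _, List.nodup_singleton _, List.isChain_singleton _⟩
  · rw [flatten_map_singleton]
    exact Finset.nodup_toList _
  · intro v
    rw [flatten_map_singleton, Finset.mem_toList]
    exact Finset.mem_univ v

private lemma exists_ppn_partition [Fintype V] (G : SimpleGraph V) :
    ∃ L : List (List V), IsPathPartition G L ∧ L.length = ppn G := by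
  have hne : {k | ∃ L : List (List V), IsPathPartition G L ∧ L.length = k}.Nonempty :=
    ⟨_, _, isPathPartition_singletons G, rfl⟩
  simpa [ppn] using Nat.sInf_mem hne

private lemma isPathPartition_mono {G H : SimpleGraph V} (h : H ≤ G) {L : List (List V)}
    (hL : IsPathPartition H L) : IsPathPartition G L :=
  ⟨fun l hl => ⟨(hL.1 l hl).1, (hL.1 l hl).2.1, ((hL.1 l hl).2.2).imp fun _ _ hab => h hab⟩,
    hL.2⟩

private lemma ppn_anti [Fintype V] {G H : SimpleGraph V} (h : H ≤ G) : ppn G ≤ ppn H := by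
  obtain ⟨L, hL, hlen⟩ := exists_ppn_partition H
  exact hlen ▸ Nat.sInf_le ⟨L, isPathPartition_mono h hL, rfl⟩

private lemma exists_adj_not_reachable {G H : SimpleGraph V} :
    ∀ {u w : V}, G.Walk u w → ¬ H.Reachable u w →
      ∃ a b : V, G.Adj a b ∧ ¬ H.Reachable a b := by
  intro u w p
  induction p with
  | nil => exact fun h => absurd (Reachable.refl _) h
  | @cons u x w ha p ih =>
    intro h
    by_cases hr : H.Reachable u x
    · exact ih fun hc => h (hr.trans hc)
    · exact ⟨u, x, ha, hr⟩

private lemma isAcyclic_sup_edge {H : SimpleGraph V} (hH : H.IsAcyclic) {a b : V}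
    (hab : a ≠ b) (hr : ¬ H.Reachable a b) :
    (H ⊔ SimpleGraph.fromEdgeSet {s(a, b)}).IsAcyclic := by
  intro v c hc
  by_cases he : s(a, b) ∈ c.edges
  · have h2 := (SimpleGraph.adj_and_reachable_delete_edges_iff_exists_cycle.mpr
      ⟨v, c, hc, he⟩).2
    apply hr
    refine h2.mono ?_
    intro x y hxy
    rw [SimpleGraph.deleteEdges_adj, SimpleGraph.sup_adj] at hxy
    rcases hxy with ⟨h1 | h1, h2'⟩
    · exact h1
    · rw [SimpleGraph.fromEdgeSet_adj] at h1
      exact absurd h1.1 h2'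
  · have hedges : ∀ e ∈ c.edges, e ∈ H.edgeSet := by
      intro e hee
      have h3 := c.edges_subset_edgeSet hee
      rw [SimpleGraph.edgeSet_sup] at h3
      rcases h3 with h3 | h3
      · exact h3
      · rw [SimpleGraph.edgeSet_fromEdgeSet] at h3
        obtain ⟨h4, _⟩ := h3
        rw [Set.mem_singleton_iff] at h4
        exact absurd (h4 ▸ hee) he
    exact hH (c.transfer H hedges) (hc.transfer hedges)

private lemma chain'_infix_of_nodup {l : List V} (hl : l.Nodup) :
    l.Chain' (fun a b => a ≠ b ∧ [a, b] <:+: l) := by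
  show List.IsChain _ l
  rw [List.isChain_iff_getElem]
  intro i h
  have h1 : i < l.length := by omega
  have h2 : i + 1 < l.length := by omega
  constructor
  · intro heq
    have := (List.Nodup.get_inj_iff hl (i := ⟨i, h1⟩) (j := ⟨i + 1, h2⟩)).mp heq
    have := Fin.mk.injEq i _ (i + 1) _ ▸ this
    omega
  · refine ⟨l.take i, l.drop (i + 2), ?_⟩
    have hspl : l = l.take i ++ (l[i] :: l[i + 1] :: l.drop (i + 2)) := by
      conv_lhs => rw [← List.take_append_drop i l]
      rw [List.drop_eq_getElem_cons h1, List.drop_eq_getElem_cons h2]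
    conv_rhs => rw [hspl]
    simp [List.get_eq_getElem]

theorem exists_spanningTree_ppn_eq [Fintype V] [Nonempty V] (G : SimpleGraph V)
    (hG : G.Connected) : ∃ T : SimpleGraph V, T ≤ G ∧ T.IsTree ∧ ppn T = ppn G := by
  classical
  obtain ⟨L, hL, hlen⟩ := exists_ppn_partition G
  obtain ⟨hpaths, hnd, hcov⟩ := hL
  set F : SimpleGraph V := SimpleGraph.fromRel (fun a b => ∃ l ∈ L, [a, b] <:+: l) with hF
  have hFG : F ≤ G := by
    intro x y hxy
    rw [hF, SimpleGraph.fromRel_adj] at hxy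
    obtain ⟨hne, h | h⟩ := hxy
    · obtain ⟨l, hlL, hinf⟩ := h
      exact List.isChain_pair.mp (((hpaths l hlL).2.2).infix hinf)
    · obtain ⟨l, hlL, hinf⟩ := h
      exact (List.isChain_pair.mp (((hpaths l hlL).2.2).infix hinf)).symm
  have hFac : F.IsAcyclic := forest_acyclic hnd
  have hfin : Finite (SimpleGraph V) :=
    Finite.of_injective (fun H => H.Adj) fun H1 H2 h => SimpleGraph.ext h
  set S : Set (SimpleGraph V) := {H | F ≤ H ∧ H ≤ G ∧ H.IsAcyclic} with hS
  have hSfin : S.Finite := Set.toFinite S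
  have hSne : S.Nonempty := ⟨F, le_refl F, hFG, hFac⟩
  obtain ⟨T, hTS, hmax⟩ := Set.Finite.exists_maximalFor id S hSfin hSne
  obtain ⟨hFT, hTG, hTac⟩ := hTS
  have hconn : T.Connected := by
    rw [SimpleGraph.connected_iff]
    refine ⟨?_, ‹Nonempty V›⟩
    intro u w
    by_contra hru
    obtain ⟨a, b, hab, hrab⟩ := exists_adj_not_reachable (hG.preconnected u w).some hru
    set T' : SimpleGraph V := T ⊔ SimpleGraph.fromEdgeSet {s(a, b)} with hT'
    have hT'S : T' ∈ S := by
      refine ⟨le_trans hFT le_sup_left, ?_, isAcyclic_sup_edge hTac hab.ne hrab⟩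
      refine sup_le hTG ?_
      intro x y hxy
      rw [SimpleGraph.fromEdgeSet_adj, Set.mem_singleton_iff, Sym2.eq_iff] at hxy
      rcases hxy with ⟨⟨h1, h2⟩ | ⟨h1, h2⟩, _⟩
      · exact h1 ▸ h2 ▸ hab
      · exact h1 ▸ h2 ▸ hab.symm
    have heq : T = T' := le_antisymm le_sup_left (hmax hT'S le_sup_left)
    have hadj' : T'.Adj a b := by
      rw [hT', SimpleGraph.sup_adj, SimpleGraph.fromEdgeSet_adj]
      exact Or.inr ⟨Set.mem_singleton _, hab.ne⟩
    rw [← heq] at hadj'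
    exact hrab hadj'.reachable
  have hTree : T.IsTree := ⟨hconn, hTac⟩
  have hLT : IsPathPartition T L := by
    refine ⟨fun l hl => ⟨(hpaths l hl).1, (hpaths l hl).2.1, ?_⟩, hnd, hcov⟩
    refine (chain'_infix_of_nodup (hpaths l hl).2.1).imp fun a b hab => ?_
    apply hFT
    rw [hF, SimpleGraph.fromRel_adj]
    exact ⟨hab.1, Or.inl ⟨l, hl, hab.2⟩⟩
  refine ⟨T, hTG, hTree, le_antisymm ?_ (ppn_anti hTG)⟩
  calc ppn T ≤ L.length := Nat.sInf_le ⟨L, hLT, rfl⟩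
    _ = ppn G := hlen
end

section
/- Let G be a complete edge-weighted graph whose edge weights take only two values a < b, and let G_a be the unweighted graph consisting of the edges of weight a. Then the minimum weight of a Hamiltonian cycle (TSP tour) in G equals n*a + (b - a)*HCN(G_a), where n is the number of vertices (n ≥ 3). -/
open SimpleGraph

variable {V : Type*}

/- ### Auxiliary lemmas -/

private lemma aux_getLastD_mem {α : Type*} : ∀ (r : List α) (x : α), r.getLastD x ∈ x :: r
  | [], _ => by simp
  | y :: r, x => by
    rw [List.getLastD_cons]
    exact List.mem_cons_of_mem _ (aux_getLastD_mem r y)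

private lemma aux_getLastD_mem' {α : Type*} (r : List α) (x : α) (h : r ≠ []) :
    r.getLastD x ∈ r := by
  match r with
  | y :: r => rw [List.getLastD_cons]; exact aux_getLastD_mem r y

/-- Build a path in the complete graph through a given list of vertices. -/
private lemma exists_top_walk [DecidableEq V] :
    ∀ (l : List V) (u : V), u ∉ l → l.Nodup →
      ∃ q : (⊤ : SimpleGraph V).Walk u (l.getLastD u),
        q.support = u :: l ∧ ∀ z, s(u, z) ∈ q.edges → l.head? = some z
  | [], u, _, _ => by rw [List.getLastD_nil]; exact ⟨Walk.nil, by simp, by simp⟩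
  | x :: l, u, h1, h2 => by
    have hux : u ≠ x := fun h => h1 (h ▸ List.mem_cons_self)
    have hul : u ∉ l := fun h => h1 (List.mem_cons_of_mem _ h)
    have hxl : x ∉ l := (List.nodup_cons.1 h2).1
    obtain ⟨q, hs, he⟩ := exists_top_walk l x hxl (List.nodup_cons.1 h2).2
    rw [List.getLastD_cons]
    refine ⟨Walk.cons (by simpa using hux) q, by simp [hs], ?_⟩
    intro z hz
    rw [Walk.edges_cons, List.mem_cons] at hz
    rcases hz with hz | hz
    · rw [Sym2.congr_right] at hz
      simp [hz]
    · exact absurd (hs ▸ Walk.fst_mem_support_of_mem_edges q hz)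
        (by simp [hux, hul])

/-- The complete graph on at least 3 vertices has a Hamiltonian cycle. -/
private lemma exists_ham_top [Fintype V] [DecidableEq V] (h3 : 3 ≤ Fintype.card V) :
    ∃ (v : V) (p : (⊤ : SimpleGraph V).Walk v v), p.IsHamiltonianCycle := by
  classical
  obtain ⟨l, hnd, hlen, hmem⟩ :
      ∃ l : List V, l.Nodup ∧ l.length = Fintype.card V ∧ ∀ v : V, v ∈ l :=
    ⟨(Finset.univ : Finset V).toList, Finset.nodup_toList _,
      by simp [Finset.length_toList], fun v => by simp [Finset.mem_toList]⟩
  match l, hnd, hlen, hmem with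
  | [], _, hlen, _ => simp at hlen; omega
  | [v], _, hlen, _ => simp at hlen; omega
  | v :: x :: r, hnd, hlen, hmem =>
  set t : List V := x :: r with ht
  have hvt : v ∉ t := (List.nodup_cons.1 hnd).1
  have htnd : t.Nodup := (List.nodup_cons.1 hnd).2
  obtain ⟨q, hs, he⟩ := exists_top_walk t v hvt htnd
  have hzt : t.getLastD v ∈ t := aux_getLastD_mem' t v (by simp [ht])
  have hzv : t.getLastD v ≠ v := fun h => hvt (h ▸ hzt)
  have hzx : t.getLastD v ≠ x := by
    intro hzx
    have hr : r ≠ [] := by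
      rintro rfl
      rw [ht] at hlen
      simp at hlen
      omega
    have hmemr : t.getLastD v ∈ r := by
      rw [ht, List.getLastD_cons]
      exact aux_getLastD_mem' r x hr
    exact (List.nodup_cons.1 htnd).1 (hzx ▸ hmemr)
  have hq_path : q.IsPath := Walk.IsPath.mk' (by rw [hs]; exact hnd)
  have hadj : (⊤ : SimpleGraph V).Adj (t.getLastD v) v := by simpa using hzv
  refine ⟨v, q.concat hadj, ?_⟩
  have hne : s(t.getLastD v, v) ∉ q.edges := by
    intro hmm
    rw [Sym2.eq_swap] at hmm
    have h := he _ hmm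
    rw [ht] at h
    simp only [List.head?_cons, Option.some.injEq] at h
    exact hzx h.symm
  rw [Walk.isHamiltonianCycle_iff_isCycle_and_support_count_tail_eq_one]
  constructor
  · rw [Walk.isCycle_def]
    refine ⟨⟨?_⟩, ?_, ?_⟩
    · rw [Walk.edges_concat, List.concat_eq_append]
      exact List.Nodup.append hq_path.isTrail.edges_nodup (List.nodup_singleton _)
        (by simpa using hne)
    · intro hnil
      have := congrArg Walk.length hnil
      rw [Walk.length_concat] at this
      simp at this
    · rw [Walk.support_concat, hs, List.cons_append, List.tail_cons]
      rw [List.nodup_append]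
      exact ⟨htnd, List.nodup_singleton _,
        by simpa using fun (a : V) (ha : a ∈ t) (h : a = v) => hvt (h ▸ ha)⟩
  · intro c
    rw [Walk.support_concat, hs, List.cons_append, List.tail_cons]
    rw [List.count_append]
    by_cases hc : c = v
    · subst hc
      rw [List.count_eq_zero_of_not_mem hvt]
      simp
    · have hct : c ∈ t := by
        have := hmem c
        rw [List.mem_cons] at this
        tauto
      rw [List.count_eq_one_of_mem htnd hct]
      simp [hc, List.count_cons, Ne.symm hc]

private lemma hamCycle_transfer [DecidableEq V] {G H : SimpleGraph V} {v : V} {p : G.Walk v v}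
    (hp : p.IsHamiltonianCycle) (h : ∀ e ∈ p.edges, e ∈ H.edgeSet) :
    (p.transfer H h).IsHamiltonianCycle := by
  classical
  rw [Walk.isHamiltonianCycle_iff_isCycle_and_support_count_tail_eq_one] at hp ⊢
  exact ⟨hp.1.transfer h, by simpa [Walk.support_transfer] using hp.2⟩

private lemma sum_filter_aux (a b : ℝ) (w : Sym2 V → ℝ) (hne : a ≠ b)
    [DecidablePred fun e : Sym2 V => w e = b] :
    ∀ l : List (Sym2 V), (∀ e ∈ l, w e = a ∨ w e = b) →
      (l.map w).sum = a * l.length + (b - a) * (l.filter (fun e => w e = b)).length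
  | [], _ => by simp
  | e :: l, h => by
    have ih := sum_filter_aux a b w hne l (fun e' he' => h e' (List.mem_cons_of_mem _ he'))
    rcases h e List.mem_cons_self with ha | hb
    · rw [List.map_cons, List.sum_cons, ih, List.filter_cons_of_neg (by simp [ha, hne]), ha,
        List.length_cons]
      push_cast
      ring
    · rw [List.map_cons, List.sum_cons, ih, List.filter_cons_of_pos (by simp [hb]), hb,
        List.length_cons, List.length_cons]
      push_cast
      ring

theorem two_valued_tsp [Fintype V] [DecidableEq V] (h3 : 3 ≤ Fintype.card V)
    (w : Sym2 V → ℝ) (a b : ℝ) (hab : a < b)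
    (hw : ∀ e : Sym2 V, ¬ e.IsDiag → w e = a ∨ w e = b) :
    sInf {x : ℝ | ∃ (v : V) (p : (⊤ : SimpleGraph V).Walk v v),
        p.IsHamiltonianCycle ∧ (p.edges.map w).sum = x}
      = (Fintype.card V : ℝ) * a
        + (b - a) * hcn (SimpleGraph.fromRel fun u v => w s(u, v) = a) := by
  classical
  set Ga := SimpleGraph.fromRel fun u v => w s(u, v) = a with hGa
  set hcnSet := {k | ∃ E' : Finset (Sym2 V), E'.card = k ∧
    (∀ e ∈ E', ¬ e.IsDiag ∧ e ∉ Ga.edgeSet) ∧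
    IsHamiltonianGraph (Ga ⊔ SimpleGraph.fromEdgeSet ↑E')} with hcnSet_def
  have hGaE : ∀ e : Sym2 V, ¬ e.IsDiag → (e ∈ Ga.edgeSet ↔ w e = a) := by
    intro e hd
    induction e with
    | _ u v =>
      rw [Sym2.mk_isDiag_iff] at hd
      rw [mem_edgeSet, hGa, SimpleGraph.fromRel_adj]
      rw [Sym2.eq_swap (a := v)]
      tauto
  have hedges : ∀ {v : V} (p : (⊤ : SimpleGraph V).Walk v v), ∀ e ∈ p.edges,
      ¬ e.IsDiag ∧ (w e = a ∨ w e = b) := by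
    intro v p e he
    have h1 := p.edges_subset_edgeSet he
    have hd := (⊤ : SimpleGraph V).not_isDiag_of_mem_edgeSet h1
    exact ⟨hd, hw e hd⟩
  -- Step A: every Hamiltonian cycle of the complete graph yields an element of the hcn set
  have key1 : ∀ (v : V) (p : (⊤ : SimpleGraph V).Walk v v), p.IsHamiltonianCycle →
      (p.edges.filter fun e => w e = b).length ∈ hcnSet := by
    intro v p hp
    have hnd : p.edges.Nodup := hp.isCycle.edges_nodup
    set F := p.edges.filter fun e => w e = b with hF
    have hFprop : ∀ e ∈ F.toFinset, ¬ e.IsDiag ∧ e ∉ Ga.edgeSet := by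
      intro e he
      rw [List.mem_toFinset, hF, List.mem_filter, decide_eq_true_eq] at he
      obtain ⟨he1, he2⟩ := he
      have hd := (hedges p e he1).1
      refine ⟨hd, ?_⟩
      rw [hGaE e hd, he2]
      exact hab.ne'
    refine ⟨F.toFinset, List.toFinset_card_of_nodup (hnd.filter _), hFprop, ?_⟩
    have hsup : ∀ e ∈ p.edges, e ∈ (Ga ⊔ SimpleGraph.fromEdgeSet ↑F.toFinset).edgeSet := by
      intro e he
      rw [edgeSet_sup]
      obtain ⟨hd, hab'⟩ := hedges p e he
      rcases hab' with ha | hb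
      · exact Or.inl ((hGaE e hd).2 ha)
      · refine Or.inr ?_
        rw [edgeSet_fromEdgeSet]
        refine ⟨?_, hd⟩
        simp only [Finset.coe_sort_coe, Finset.mem_coe, List.mem_toFinset, hF, List.mem_filter,
          decide_eq_true_eq]
        exact ⟨he, hb⟩
    exact ⟨v, p.transfer _ hsup, hamCycle_transfer hp hsup⟩
  -- Step B: an element of the hcn set yields a Hamiltonian cycle with few b-edges
  have key2 : ∀ (E' : Finset (Sym2 V)), (∀ e ∈ E', ¬ e.IsDiag ∧ e ∉ Ga.edgeSet) →
      IsHamiltonianGraph (Ga ⊔ SimpleGraph.fromEdgeSet ↑E') →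
      ∃ (v : V) (p : (⊤ : SimpleGraph V).Walk v v), p.IsHamiltonianCycle ∧
        (p.edges.filter fun e => w e = b).length ≤ E'.card := by
    intro E' hE' hHam
    obtain ⟨v, q, hq⟩ := hHam
    refine ⟨v, q.map (Hom.ofLE le_top), hq.map (f := Hom.ofLE le_top) Function.bijective_id, ?_⟩
    have hedq : (q.map (Hom.ofLE le_top)).edges = q.edges := by
      rw [Walk.edges_map]
      simp
    rw [hedq]
    have hnd : q.edges.Nodup := hq.isCycle.edges_nodup
    have hsub : ∀ e ∈ q.edges.filter (fun e => w e = b), e ∈ E' := by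
      intro e he
      rw [List.mem_filter, decide_eq_true_eq] at he
      obtain ⟨he1, he2⟩ := he
      have hin := q.edges_subset_edgeSet he1
      rw [edgeSet_sup] at hin
      have hd : ¬ e.IsDiag := by
        rcases hin with h | h
        · exact Ga.not_isDiag_of_mem_edgeSet h
        · exact (SimpleGraph.fromEdgeSet _).not_isDiag_of_mem_edgeSet h
      rcases hin with h | h
      · have ha := (hGaE e hd).1 h
        rw [ha] at he2
        exact absurd he2 hab.ne
      · rw [edgeSet_fromEdgeSet] at h
        simpa using h.1
    calc (q.edges.filter (fun e => w e = b)).length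
        = (q.edges.filter (fun e => w e = b)).toFinset.card :=
          (List.toFinset_card_of_nodup (hnd.filter _)).symm
      _ ≤ E'.card := Finset.card_le_card (fun e he => hsub e (List.mem_toFinset.1 he))
  -- the hcn set is nonempty, and its infimum is attained
  obtain ⟨v0, p0, hp0⟩ := exists_ham_top h3
  have hne : hcnSet.Nonempty := ⟨_, key1 v0 p0 hp0⟩
  have hmem := Nat.sInf_mem hne
  rw [hcnSet_def] at hmem
  obtain ⟨E', hEcard, hEprop, hEham⟩ := hmem
  obtain ⟨v1, p1, hp1, hp1le⟩ := key2 E' hEprop hEham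
  rw [hEcard] at hp1le
  have hge : sInf hcnSet ≤ (p1.edges.filter fun e => w e = b).length :=
    Nat.sInf_le (key1 v1 p1 hp1)
  have heq : (p1.edges.filter fun e => w e = b).length = sInf hcnSet :=
    le_antisymm hp1le hge
  have hhcn : hcn Ga = sInf hcnSet := rfl
  -- weight formula for any Hamiltonian cycle
  have hweight : ∀ (v : V) (p : (⊤ : SimpleGraph V).Walk v v), p.IsHamiltonianCycle →
      (p.edges.map w).sum = a * (Fintype.card V : ℝ)
        + (b - a) * ((p.edges.filter fun e => w e = b).length : ℝ) := by
    intro v p hp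
    rw [sum_filter_aux a b w hab.ne p.edges (fun e he => (hedges p e he).2)]
    rw [Walk.length_edges, hp.length_eq]
  refine IsLeast.csInf_eq ⟨⟨v1, p1, hp1, ?_⟩, ?_⟩
  · rw [hweight v1 p1 hp1, heq, hhcn]
    ring
  · rintro x ⟨v, p, hp, rfl⟩
    rw [hweight v p hp, hhcn]
    have hk : sInf hcnSet ≤ (p.edges.filter fun e => w e = b).length :=
      Nat.sInf_le (key1 v p hp)
    have : ((sInf hcnSet : ℕ) : ℝ) ≤ ((p.edges.filter fun e => w e = b).length : ℝ) :=
      Nat.cast_le.2 hk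
    nlinarith [sub_pos.2 hab]
end
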